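/- Let T₁ and T₂ be subspaces of a finite-dimensional real inner product space E, set M := P_{T₁} ∘ P_{T₂} + P_{T₁^⊥} ∘ P_{T₂^⊥}, fix λ ∈ (0, 2), set M_λ := (1 − λ)·Id + λ·M, and let M^∞ be the orthogonal projection onto (T₁ ∩ T₂) ⊕ (T₁^⊥ ∩ T₂^⊥). Let c_F := c_F(T₂, T₁) be the Friedrichs cosine of T₂ and T₁ and ρ := √((1 − λ)² + λ(2 − λ)·c_F²). Suppose (z_k) is a sequence in E, z* ∈ E and K ∈ ℕ are such that z_{k+1} − z* = (M_λ − M^∞)(z_k − z*) for all k ≥ K. Then ρ < 1 and for all k ≥ K, ‖z_k − z*‖ ≤ ρ^{k−K}·‖z_K − z*‖. -/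

import Mathlib

open RealInnerProductSpace

/-- The orthogonal projection onto a subspace, as a continuous linear endomorphism. -/
noncomputable def projCLM {E : Type*} [NormedAddCommGroup E] [InnerProductSpace ℝ E]
    [FiniteDimensional ℝ E] (T : Submodule ℝ E) : E →L[ℝ] E :=
  T.subtypeL.comp (T.orthogonalProjection)

/-- The Friedrichs cosine of two subspaces `T₁`, `T₂`: the supremum of `⟪u, v⟫` over unit
vectors `u ∈ T₁ ∩ W^⊥`, `v ∈ T₂ ∩ W^⊥`, where `W = T₁ ⊓ T₂` (`sSup ∅ = 0` in `ℝ`). -/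
noncomputable def friedrichsCos {E : Type*} [NormedAddCommGroup E] [InnerProductSpace ℝ E]
    (T₁ T₂ : Submodule ℝ E) : ℝ :=
  sSup { r : ℝ | ∃ u v : E, u ∈ T₁ ⊓ (T₁ ⊓ T₂)ᗮ ∧ v ∈ T₂ ⊓ (T₁ ⊓ T₂)ᗮ ∧
    ‖u‖ = 1 ∧ ‖v‖ = 1 ∧ r = ⟪u, v⟫ }

section Aux
set_option linter.unusedSectionVars false
variable {E : Type*} [NormedAddCommGroup E] [InnerProductSpace ℝ E] [FiniteDimensional ℝ E]

lemma projCLM_mem (T : Submodule ℝ E) (x : E) : projCLM T x ∈ T := (T.orthogonalProjection x).2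

lemma projCLM_eq_of_mem {T : Submodule ℝ E} {x : E} (h : x ∈ T) : projCLM T x = x := by
  exact Submodule.starProjection_eq_self_iff.2 h

lemma projCLM_eq_zero_of_mem_orth {T : Submodule ℝ E} {x : E} (h : x ∈ Tᗮ) :
    projCLM T x = 0 := by
  simp [projCLM, Submodule.orthogonalProjectionOnto_apply_of_mem_orthogonal h]

lemma projCLM_add_orth (T : Submodule ℝ E) (x : E) : projCLM T x + projCLM Tᗮ x = x :=
  T.starProjection_add_starProjection_orthogonal x

lemma inner_projCLM_left (T : Submodule ℝ E) (x y : E) :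
    ⟪projCLM T x, y⟫ = ⟪x, projCLM T y⟫ :=
  Submodule.inner_starProjection_left_eq_right T x y

lemma inner_projCLM_self (T : Submodule ℝ E) (x : E) :
    ⟪x, projCLM T x⟫ = ‖projCLM T x‖ ^ 2 := by
  have : ⟪x, projCLM T x⟫ = ⟪x, projCLM T (projCLM T x)⟫ := by
    rw [projCLM_eq_of_mem (projCLM_mem T x)]
  rw [this, ← inner_projCLM_left, real_inner_self_eq_norm_sq]

lemma norm_projCLM_le (T : Submodule ℝ E) (x : E) : ‖projCLM T x‖ ≤ ‖x‖ := by
  have h := inner_projCLM_self T x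
  have h2 := real_inner_le_norm x (projCLM T x)
  nlinarith [norm_nonneg (projCLM T x), norm_nonneg x]

lemma projCLM_mem_orth_of_le {W T : Submodule ℝ E} (hWT : W ≤ T) {x : E} (hx : x ∈ Wᗮ) :
    projCLM T x ∈ Wᗮ := by
  intro w hw
  rw [real_inner_comm, inner_projCLM_left, projCLM_eq_of_mem (hWT hw), real_inner_comm]
  exact hx w hw

def fSet (A B : Submodule ℝ E) : Set ℝ :=
  { r : ℝ | ∃ u v : E, u ∈ A ⊓ (A ⊓ B)ᗮ ∧ v ∈ B ⊓ (A ⊓ B)ᗮ ∧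
    ‖u‖ = 1 ∧ ‖v‖ = 1 ∧ r = ⟪u, v⟫ }

lemma friedrichsCos_eq (A B : Submodule ℝ E) : friedrichsCos A B = sSup (fSet A B) := rfl

lemma fSet_subset (A B : Submodule ℝ E) : fSet A B ⊆ Set.Icc (-1 : ℝ) 1 := by
  rintro r ⟨u, v, hu, hv, hnu, hnv, rfl⟩
  have := abs_real_inner_le_norm u v
  rw [hnu, hnv] at this
  constructor <;> [linarith [neg_abs_le (⟪u,v⟫ : ℝ)]; linarith [le_abs_self (⟪u,v⟫ : ℝ)]]

lemma fSet_bddAbove (A B : Submodule ℝ E) : BddAbove (fSet A B) :=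
  ⟨1, fun r hr => (fSet_subset A B hr).2⟩

lemma fSet_neg {A B : Submodule ℝ E} {r : ℝ} (h : r ∈ fSet A B) : -r ∈ fSet A B := by
  obtain ⟨u, v, hu, hv, hnu, hnv, rfl⟩ := h
  exact ⟨u, -v, hu, neg_mem hv, hnu, by simpa using hnv, by rw [inner_neg_right]⟩

lemma fCos_nonneg (A B : Submodule ℝ E) : 0 ≤ friedrichsCos A B := by
  rcases Set.eq_empty_or_nonempty (fSet A B) with h | ⟨r, hr⟩
  · rw [friedrichsCos_eq, h, Real.sSup_empty]
  · rcases le_or_gt 0 r with h0 | h0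
    · exact h0.trans (le_csSup (fSet_bddAbove A B) hr)
    · have := le_csSup (fSet_bddAbove A B) (fSet_neg hr)
      rw [friedrichsCos_eq]; linarith

lemma fSet_isCompact (A B : Submodule ℝ E) : IsCompact (fSet A B) := by
  have : fSet A B = (fun p : E × E => (⟪p.1, p.2⟫ : ℝ)) ''
      {p : E × E | p.1 ∈ A ⊓ (A ⊓ B)ᗮ ∧ p.2 ∈ B ⊓ (A ⊓ B)ᗮ ∧ ‖p.1‖ = 1 ∧ ‖p.2‖ = 1} := by
    ext r
    constructor
    · rintro ⟨u, v, hu, hv, hnu, hnv, rfl⟩; exact ⟨(u, v), ⟨hu, hv, hnu, hnv⟩, rfl⟩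
    · rintro ⟨⟨u, v⟩, ⟨hu, hv, hnu, hnv⟩, rfl⟩; exact ⟨u, v, hu, hv, hnu, hnv, rfl⟩
  rw [this]
  apply IsCompact.image _ (continuous_inner (𝕜 := ℝ) (E := E))
  apply Metric.isCompact_of_isClosed_isBounded
  · apply IsClosed.inter
    · exact ((A ⊓ (A ⊓ B)ᗮ).closed_of_finiteDimensional).preimage continuous_fst
    apply IsClosed.inter
    · exact ((B ⊓ (A ⊓ B)ᗮ).closed_of_finiteDimensional).preimage continuous_snd
    apply IsClosed.inter
    · exact isClosed_eq (continuous_norm.comp continuous_fst) continuous_const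
    · exact isClosed_eq (continuous_norm.comp continuous_snd) continuous_const
  · apply Bornology.IsBounded.subset (Metric.isBounded_closedBall (x := (0 : E × E)) (r := 1))
    rintro ⟨u, v⟩ ⟨_, _, hnu, hnv⟩
    simp [Prod.norm_def, hnu, hnv, Metric.mem_closedBall, dist_eq_norm]

lemma fCos_le_one (A B : Submodule ℝ E) : friedrichsCos A B ≤ 1 := by
  rcases Set.eq_empty_or_nonempty (fSet A B) with h | hne
  · rw [friedrichsCos_eq, h, Real.sSup_empty]; norm_num
  · exact csSup_le hne fun r hr => (fSet_subset A B hr).2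

lemma fCos_mem_of_nonempty {A B : Submodule ℝ E} (h : (fSet A B).Nonempty) :
    friedrichsCos A B ∈ fSet A B :=
  (fSet_isCompact A B).sSup_mem h

lemma fCos_lt_one (A B : Submodule ℝ E) : friedrichsCos A B < 1 := by
  rcases Set.eq_empty_or_nonempty (fSet A B) with h | hne
  · rw [friedrichsCos_eq, h, Real.sSup_empty]; norm_num
  refine lt_of_le_of_ne (fCos_le_one A B) fun hc => ?_
  obtain ⟨u, v, hu, hv, hnu, hnv, huv⟩ := fCos_mem_of_nonempty hne
  rw [hc] at huv
  have h1 : ⟪u, v⟫ = ‖u‖ * ‖v‖ := by rw [hnu, hnv, ← huv]; ring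
  rw [inner_eq_norm_mul_iff_real, hnu, hnv, one_smul, one_smul] at h1
  subst h1
  have huW : u ∈ A ⊓ B := ⟨hu.1, hv.1⟩
  have h0 : (⟪u, u⟫ : ℝ) = 0 := hu.2 u huW
  rw [real_inner_self_eq_norm_sq, hnu] at h0
  norm_num at h0

lemma inner_le_fCos {A B : Submodule ℝ E} {u v : E}
    (hu : u ∈ A ⊓ (A ⊓ B)ᗮ) (hv : v ∈ B ⊓ (A ⊓ B)ᗮ) :
    ⟪u, v⟫ ≤ friedrichsCos A B * (‖u‖ * ‖v‖) := by
  rcases eq_or_ne u 0 with rfl | hu0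
  · simp
  rcases eq_or_ne v 0 with rfl | hv0
  · simp
  have hnu : ‖u‖ ≠ 0 := norm_ne_zero_iff.2 hu0
  have hnv : ‖v‖ ≠ 0 := norm_ne_zero_iff.2 hv0
  have hmem : (⟪(‖u‖⁻¹ • u), (‖v‖⁻¹ • v)⟫ : ℝ) ∈ fSet A B := by
    refine ⟨‖u‖⁻¹ • u, ‖v‖⁻¹ • v, ?_, ?_, ?_, ?_, rfl⟩
    · exact Submodule.smul_mem _ _ hu
    · exact Submodule.smul_mem _ _ hv
    · rw [norm_smul, norm_inv, norm_norm, inv_mul_cancel₀ hnu]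
    · rw [norm_smul, norm_inv, norm_norm, inv_mul_cancel₀ hnv]
  have := le_csSup (fSet_bddAbove A B) hmem
  rw [real_inner_smul_left, real_inner_smul_right] at this
  rw [← friedrichsCos_eq] at this
  have hpu : 0 < ‖u‖ := lt_of_le_of_ne (norm_nonneg u) (Ne.symm hnu)
  have hpv : 0 < ‖v‖ := lt_of_le_of_ne (norm_nonneg v) (Ne.symm hnv)
  calc (⟪u, v⟫:ℝ) = (‖u‖ * ‖v‖) * (‖u‖⁻¹ * (‖v‖⁻¹ * ⟪u, v⟫)) := by
        field_simp
    _ ≤ (‖u‖ * ‖v‖) * friedrichsCos A B := by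
        apply mul_le_mul_of_nonneg_left this (by positivity)
    _ = friedrichsCos A B * (‖u‖ * ‖v‖) := by ring

lemma fCos_comm (A B : Submodule ℝ E) : friedrichsCos A B = friedrichsCos B A := by
  rw [friedrichsCos_eq, friedrichsCos_eq]
  congr 1
  ext r
  constructor
  · rintro ⟨u, v, hu, hv, hnu, hnv, rfl⟩
    exact ⟨v, u, by rwa [inf_comm A B] at hv, by rwa [inf_comm A B] at hu, hnv, hnu,
      (real_inner_comm v u)⟩
  · rintro ⟨u, v, hu, hv, hnu, hnv, rfl⟩
    exact ⟨v, u, by rwa [inf_comm B A] at hv, by rwa [inf_comm B A] at hu, hnv, hnu,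
      (real_inner_comm v u)⟩

lemma norm_projCLM_le_fCos {A B : Submodule ℝ E} {v : E} (hv : v ∈ B ⊓ (A ⊓ B)ᗮ) :
    ‖projCLM A v‖ ≤ friedrichsCos A B * ‖v‖ := by
  set u := projCLM A v with hu_def
  have hu : u ∈ A ⊓ (A ⊓ B)ᗮ := ⟨projCLM_mem A v, projCLM_mem_orth_of_le inf_le_left hv.2⟩
  have h1 : ‖u‖ ^ 2 = ⟪u, v⟫ := by
    rw [real_inner_comm, hu_def, inner_projCLM_self]
  have h2 := inner_le_fCos hu hv
  have hc := fCos_nonneg A B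
  rcases eq_or_lt_of_le (norm_nonneg u) with h | h
  · rw [← h]; exact mul_nonneg hc (norm_nonneg v)
  · nlinarith

lemma fCos_orth_le (A B : Submodule ℝ E) : friedrichsCos Aᗮ Bᗮ ≤ friedrichsCos A B := by
  rcases Set.eq_empty_or_nonempty (fSet Aᗮ Bᗮ) with h | hne
  · rw [friedrichsCos_eq, h, Real.sSup_empty]; exact fCos_nonneg A B
  obtain ⟨u, v, hu, hv, hnu, hnv, hc⟩ := fCos_mem_of_nonempty hne
  set c := friedrichsCos Aᗮ Bᗮ with hcdef
  rcases le_or_gt c 0 with h0 | h0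
  · exact h0.trans (fCos_nonneg A B)
  have hlt : c < 1 := fCos_lt_one Aᗮ Bᗮ
  -- p := projection of u onto Bᗮ equals c • v
  have key : ∀ (X Y : Submodule ℝ E) (x y : E), x ∈ Xᗮ ⊓ (Xᗮ ⊓ Yᗮ)ᗮ → y ∈ Yᗮ ⊓ (Xᗮ ⊓ Yᗮ)ᗮ →
      ‖x‖ = 1 → ‖y‖ = 1 → (⟪x, y⟫ : ℝ) = c → fSet Xᗮ Yᗮ = fSet Aᗮ Bᗮ →
      projCLM Yᗮ x = c • y := by
    intro X Y x y hx hy hnx hny hxy hset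
    set p := projCLM Yᗮ x with hp_def
    have hpY : p ∈ Yᗮ := projCLM_mem _ x
    have hpW : p ∈ (Xᗮ ⊓ Yᗮ)ᗮ := projCLM_mem_orth_of_le inf_le_right hx.2
    have hip : (⟪x, y⟫ : ℝ) = ⟪p, y⟫ := by
      rw [hp_def, inner_projCLM_left, projCLM_eq_of_mem hy.1]
    have hcp : c ≤ ‖p‖ := by
      have := real_inner_le_norm p y
      rw [hny, mul_one] at this
      rw [hxy] at hip; linarith
    have hp0 : p ≠ 0 := by
      intro h
      rw [h] at hcp; simp at hcp; linarith
    have hnp : (0:ℝ) < ‖p‖ := norm_pos_iff.2 hp0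
    have hxp : (⟪x, p⟫ : ℝ) = ‖p‖ ^ 2 := inner_projCLM_self _ x
    have hpc : ‖p‖ ≤ c := by
      have hmem : ‖p‖ ∈ fSet Aᗮ Bᗮ := by
        rw [← hset]
        refine ⟨x, ‖p‖⁻¹ • p, hx, ⟨Submodule.smul_mem _ _ hpY, Submodule.smul_mem _ _ hpW⟩,
          hnx, ?_, ?_⟩
        · rw [norm_smul, norm_inv, norm_norm, inv_mul_cancel₀ hnp.ne']
        · rw [real_inner_smul_right, hxp, sq]
          field_simp
      exact le_csSup (fSet_bddAbove _ _) hmem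
    have hpeq : ‖p‖ = c := le_antisymm hpc hcp
    have heq : (⟪p, y⟫ : ℝ) = ‖p‖ * ‖y‖ := by
      rw [hny, mul_one, hpeq, ← hxy, hip]
    rw [inner_eq_norm_mul_iff_real, hny, one_smul, hpeq] at heq
    exact heq
  have hpu : projCLM Bᗮ u = c • v := key A B u v hu hv hnu hnv hc.symm rfl
  have hqv : projCLM Aᗮ v = c • u := by
    apply key B A v u (by rwa [inf_comm Aᗮ Bᗮ] at hv) (by rwa [inf_comm Aᗮ Bᗮ] at hu)
      hnv hnu (by rw [real_inner_comm]; exact hc.symm)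
    · unfold fSet; rw [inf_comm Bᗮ Aᗮ]
      ext r
      constructor
      · rintro ⟨x, y, hx, hy, h1, h2, rfl⟩
        exact ⟨y, x, hy, hx, h2, h1, (real_inner_comm y x)⟩
      · rintro ⟨x, y, hx, hy, h1, h2, rfl⟩
        exact ⟨y, x, hy, hx, h2, h1, (real_inner_comm y x)⟩
  -- a = v - c•u ∈ A, b = u - c•v ∈ B
  have ha_mem : v - c • u ∈ A := by
    have h1 := projCLM_add_orth Aᗮ v
    rw [hqv] at h1
    have h2 : v - c • u = projCLM Aᗮᗮ v := by
      conv_lhs => rw [← h1]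
      rw [add_sub_cancel_left]
    rw [Submodule.orthogonal_orthogonal] at h2
    rw [h2]; exact projCLM_mem A v
  have hb_mem : u - c • v ∈ B := by
    have h1 := projCLM_add_orth Bᗮ u
    rw [hpu] at h1
    have h2 : u - c • v = projCLM Bᗮᗮ u := by
      conv_lhs => rw [← h1]
      rw [add_sub_cancel_left]
    rw [Submodule.orthogonal_orthogonal] at h2
    rw [h2]; exact projCLM_mem B u
  have huv : (⟪u, v⟫ : ℝ) = c := hc.symm
  have hvu : (⟪v, u⟫ : ℝ) = c := by rw [real_inner_comm]; exact hc.symm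
  have hnu2 : (⟪u, u⟫ : ℝ) = 1 := by rw [real_inner_self_eq_norm_sq, hnu]; norm_num
  have hnv2 : (⟪v, v⟫ : ℝ) = 1 := by rw [real_inner_self_eq_norm_sq, hnv]; norm_num
  have ha_norm : ‖v - c • u‖ ^ 2 = 1 - c ^ 2 := by
    rw [norm_sub_sq_real, real_inner_smul_right, norm_smul, hvu]
    simp [norm_sub_sq_real, hnu, hnv]
    nlinarith [abs_nonneg c, sq_abs c]
  have hb_norm : ‖u - c • v‖ ^ 2 = 1 - c ^ 2 := by
    rw [norm_sub_sq_real, real_inner_smul_right, norm_smul, huv]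
    simp [hnu, hnv]
    nlinarith [abs_nonneg c, sq_abs c]
  have hs : (0:ℝ) < 1 - c ^ 2 := by nlinarith
  set s := Real.sqrt (1 - c ^ 2) with hs_def
  have hs0 : 0 < s := Real.sqrt_pos.2 hs
  have hsa : ‖v - c • u‖ = s := by
    rw [hs_def, ← ha_norm, Real.sqrt_sq (norm_nonneg _)]
  have hsb : ‖u - c • v‖ = s := by
    rw [hs_def, ← hb_norm, Real.sqrt_sq (norm_nonneg _)]
  have horthW : ∀ x ∈ A ⊓ B, ∀ (r : ℝ), (⟪x, r • (v - c • u)⟫ : ℝ) = 0 ∧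
      (⟪x, r • (u - c • v)⟫ : ℝ) = 0 := by
    intro w hw r
    have h1 : (⟪w, u⟫ : ℝ) = 0 := hu.1 w hw.1
    have h2 : (⟪w, v⟫ : ℝ) = 0 := hv.1 w hw.2
    constructor <;>
      simp [real_inner_smul_right, inner_sub_right, h1, h2]
  have hmem : c ∈ fSet A B := by
    refine ⟨s⁻¹ • (c • u - v), s⁻¹ • (u - c • v), ⟨?_, ?_⟩, ⟨?_, ?_⟩, ?_, ?_, ?_⟩
    · apply Submodule.smul_mem
      have : c • u - v = -(v - c • u) := by abel
      rw [this]; exact neg_mem ha_mem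
    · intro w hw
      have := (horthW w hw (-s⁻¹)).1
      have h2 : (⟪w, s⁻¹ • (c • u - v)⟫ : ℝ) = ⟪w, (-s⁻¹) • (v - c • u)⟫ := by
        congr 1
        rw [neg_smul, ← smul_neg]
        congr 1; abel
      rw [h2]; exact this
    · exact Submodule.smul_mem _ _ hb_mem
    · intro w hw
      exact (horthW w hw s⁻¹).2
    · rw [norm_smul, norm_inv, Real.norm_eq_abs, abs_of_pos hs0]
      have : ‖c • u - v‖ = ‖v - c • u‖ := by rw [← norm_neg]; congr 1; abel
      rw [this, hsa, inv_mul_cancel₀ hs0.ne']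
    · rw [norm_smul, norm_inv, Real.norm_eq_abs, abs_of_pos hs0, hsb,
        inv_mul_cancel₀ hs0.ne']
    · rw [real_inner_smul_left, real_inner_smul_right]
      have hexp : (⟪c • u - v, u - c • v⟫ : ℝ) = c * (1 - c ^ 2) := by
        simp [inner_sub_left, inner_sub_right, real_inner_smul_left, real_inner_smul_right,
          huv, hvu, hnu2, hnv2, hnu, hnv]
        ring
      have hss : s * s = 1 - c ^ 2 := Real.mul_self_sqrt hs.le
      rw [hexp, ← hss]
      field_simp
  exact le_csSup (fSet_bddAbove A B) hmem

lemma inner_orth_pair {T : Submodule ℝ E} {a b : E} (ha : a ∈ T) (hb : b ∈ Tᗮ) :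
    (⟪a, b⟫ : ℝ) = 0 := hb a ha

lemma M_inner_self (T₁ T₂ : Submodule ℝ E) (x : E) :
    (⟪x, projCLM T₁ (projCLM T₂ x) + projCLM T₁ᗮ (projCLM T₂ᗮ x)⟫ : ℝ)
      = ‖projCLM T₁ (projCLM T₂ x)‖ ^ 2 + ‖projCLM T₁ᗮ (projCLM T₂ᗮ x)‖ ^ 2 := by
  set s := projCLM T₂ x with hs
  set t := projCLM T₂ᗮ x with ht
  have hx : s + t = x := projCLM_add_orth T₂ x
  have hst : (⟪s, t⟫ : ℝ) = 0 := inner_orth_pair (projCLM_mem T₂ x) (projCLM_mem T₂ᗮ x)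
  have h1 : (⟪s, projCLM T₁ s⟫ : ℝ) = ‖projCLM T₁ s‖ ^ 2 := inner_projCLM_self T₁ s
  have h2 : (⟪t, projCLM T₁ᗮ t⟫ : ℝ) = ‖projCLM T₁ᗮ t‖ ^ 2 := inner_projCLM_self T₁ᗮ t
  have h3 : (⟪t, projCLM T₁ s⟫ : ℝ) + (⟪s, projCLM T₁ᗮ t⟫ : ℝ) = 0 := by
    have e1 : (⟪t, projCLM T₁ s⟫ : ℝ) = ⟪s, projCLM T₁ t⟫ := by
      rw [← inner_projCLM_left]; exact real_inner_comm _ _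
    rw [e1, ← inner_add_right, projCLM_add_orth T₁ t]
    exact hst
  have hgoal : (⟪x, projCLM T₁ s + projCLM T₁ᗮ t⟫ : ℝ)
      = ⟪s, projCLM T₁ s⟫ + ⟪t, projCLM T₁ s⟫ + (⟪s, projCLM T₁ᗮ t⟫ + ⟪t, projCLM T₁ᗮ t⟫) := by
    rw [← hx, inner_add_right, inner_add_left, inner_add_left]
  rw [hgoal, h1, h2]
  linarith


lemma M_norm_sq (T₁ T₂ : Submodule ℝ E) (x : E) :
    ‖projCLM T₁ (projCLM T₂ x) + projCLM T₁ᗮ (projCLM T₂ᗮ x)‖ ^ 2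
      = ‖projCLM T₁ (projCLM T₂ x)‖ ^ 2 + ‖projCLM T₁ᗮ (projCLM T₂ᗮ x)‖ ^ 2 := by
  have h := inner_orth_pair (projCLM_mem T₁ (projCLM T₂ x)) (projCLM_mem T₁ᗮ (projCLM T₂ᗮ x))
  rw [norm_add_sq_real, h]
  ring

end Aux

set_option maxHeartbeats 1600000 in
/-- Optimal local linear convergence of stationary Douglas–Rachford in the polyhedral
case: a sequence evolving by `z_{k+1} − z* = (M_λ − M^∞)(z_k − z*)` converges linearly
with rate `√((1−λ)² + λ(2−λ) c_F²) < 1`. -/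
theorem polyhedral_DR_local_linear_convergence {E : Type*} [NormedAddCommGroup E]
    [InnerProductSpace ℝ E] [FiniteDimensional ℝ E]
    (T₁ T₂ : Submodule ℝ E)
    (M : E →L[ℝ] E)
    (hM : M = (projCLM T₁).comp (projCLM T₂) + (projCLM T₁ᗮ).comp (projCLM T₂ᗮ))
    {l : ℝ} (hl : l ∈ Set.Ioo (0 : ℝ) 2)
    (Ml : E →L[ℝ] E) (hMl : Ml = (1 - l) • (1 : E →L[ℝ] E) + l • M)
    (Minf : E →L[ℝ] E) (hMinf : Minf = projCLM ((T₁ ⊓ T₂) ⊔ (T₁ᗮ ⊓ T₂ᗮ)))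
    (cF : ℝ) (hcF : cF = friedrichsCos T₂ T₁)
    (ρ : ℝ) (hρ : ρ = Real.sqrt ((1 - l) ^ 2 + l * (2 - l) * cF ^ 2))
    (z : ℕ → E) (zs : E) (K : ℕ)
    (hrec : ∀ k, K ≤ k → z (k + 1) - zs = (Ml - Minf) (z k - zs)) :
    ρ < 1 ∧ ∀ k, K ≤ k → ‖z k - zs‖ ≤ ρ ^ (k - K) * ‖z K - zs‖ := by
  obtain ⟨hl0, hl2⟩ := hl
  have hc0 : 0 ≤ cF := hcF ▸ fCos_nonneg T₂ T₁
  have hc1 : cF < 1 := hcF ▸ fCos_lt_one T₂ T₁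
  have hρ0 : 0 ≤ ρ := hρ ▸ Real.sqrt_nonneg _
  have hll : (0:ℝ) < l * (2 - l) := mul_pos hl0 (by linarith)
  have hρsq : ρ ^ 2 = (1 - l) ^ 2 + l * (2 - l) * cF ^ 2 := by
    rw [hρ, Real.sq_sqrt (by nlinarith [sq_nonneg (1 - l), sq_nonneg cF])]
  have hρ1 : ρ < 1 := by
    have hcsq : cF ^ 2 < 1 := by nlinarith
    have hx : ρ ^ 2 < 1 := by rw [hρsq]; nlinarith [sq_nonneg (1 - l)]
    nlinarith [sq_nonneg (ρ - 1)]
  refine ⟨hρ1, ?_⟩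
  set W := T₁ ⊓ T₂ with hW
  set Wt := T₁ᗮ ⊓ T₂ᗮ with hWt
  set F := W ⊔ Wt with hF
  have hcontr : ∀ v : E, ‖(Ml - Minf) v‖ ≤ ρ * ‖v‖ := by
    intro v
    set q := projCLM Fᗮ v with hq
    set p := projCLM F v with hp
    have hpq : p + q = v := projCLM_add_orth F v
    have hMp : M p = p := by
      obtain ⟨w, hw, wt, hwt, hsum⟩ := Submodule.mem_sup.1 (projCLM_mem F v)
      rw [hM]
      simp only [ContinuousLinearMap.add_apply, ContinuousLinearMap.coe_comp', Function.comp_apply]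
      have e1 : projCLM T₂ (w + wt) = w := by
        rw [map_add, projCLM_eq_of_mem hw.2, projCLM_eq_zero_of_mem_orth hwt.2, add_zero]
      have e2 : projCLM T₂ᗮ (w + wt) = wt := by
        rw [map_add, projCLM_eq_of_mem hwt.2,
          projCLM_eq_zero_of_mem_orth (Submodule.le_orthogonal_orthogonal T₂ hw.2), zero_add]
      rw [show p = w + wt from hsum.symm, e1, e2, projCLM_eq_of_mem hw.1,
        projCLM_eq_of_mem hwt.1]
    have himg : (Ml - Minf) v = (1 - l) • q + l • (M q) := by
      have hv' : M v = p + M q := by rw [← hpq, map_add, hMp]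
      rw [ContinuousLinearMap.sub_apply, hMl, hMinf]
      simp only [ContinuousLinearMap.add_apply, ContinuousLinearMap.smul_apply,
        ContinuousLinearMap.one_apply]
      rw [hv', ← hp]
      rw [show v = p + q from hpq.symm]
      module
    have hqW : q ∈ Wᗮ := Submodule.orthogonal_le le_sup_left (projCLM_mem Fᗮ v)
    have hqWt : q ∈ Wtᗮ := Submodule.orthogonal_le le_sup_right (projCLM_mem Fᗮ v)
    have h1 : ‖projCLM T₁ (projCLM T₂ q)‖ ≤ cF * ‖projCLM T₂ q‖ := by
      have := norm_projCLM_le_fCos (A := T₁) (B := T₂)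
        ⟨projCLM_mem T₂ q, projCLM_mem_orth_of_le inf_le_right hqW⟩
      rwa [fCos_comm, ← hcF] at this
    have h2 : ‖projCLM T₁ᗮ (projCLM T₂ᗮ q)‖ ≤ cF * ‖projCLM T₂ᗮ q‖ := by
      have hb := norm_projCLM_le_fCos (A := T₁ᗮ) (B := T₂ᗮ)
        ⟨projCLM_mem T₂ᗮ q, projCLM_mem_orth_of_le inf_le_right hqWt⟩
      have hle : friedrichsCos T₁ᗮ T₂ᗮ ≤ cF := by
        rw [hcF, fCos_comm T₂ T₁]
        exact fCos_orth_le T₁ T₂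
      exact hb.trans (mul_le_mul_of_nonneg_right hle (norm_nonneg _))
    have hMq : M q = projCLM T₁ (projCLM T₂ q) + projCLM T₁ᗮ (projCLM T₂ᗮ q) := by
      rw [hM]
      simp [ContinuousLinearMap.add_apply, ContinuousLinearMap.coe_comp', Function.comp_apply]
    have hq_pyth : ‖projCLM T₂ q‖ ^ 2 + ‖projCLM T₂ᗮ q‖ ^ 2 = ‖q‖ ^ 2 := by
      have h := inner_orth_pair (projCLM_mem T₂ q) (projCLM_mem T₂ᗮ q)
      have hdec : projCLM T₂ q + projCLM T₂ᗮ q = q := projCLM_add_orth T₂ q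
      have hns := norm_add_sq_real (projCLM T₂ q) (projCLM T₂ᗮ q)
      rw [hdec, h] at hns
      linarith
    have hMq_sq : ‖M q‖ ^ 2 ≤ cF ^ 2 * ‖q‖ ^ 2 := by
      rw [hMq, M_norm_sq]
      nlinarith [norm_nonneg (projCLM T₁ (projCLM T₂ q)), norm_nonneg (projCLM T₁ᗮ (projCLM T₂ᗮ q)),
        norm_nonneg (projCLM T₂ q), norm_nonneg (projCLM T₂ᗮ q)]
    have hinner : (⟪q, M q⟫ : ℝ) = ‖M q‖ ^ 2 := by
      rw [hMq, M_inner_self, M_norm_sq]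
    have hsq : ‖(1 - l) • q + l • (M q)‖ ^ 2
        = (1 - l) ^ 2 * ‖q‖ ^ 2 + l * (2 - l) * ‖M q‖ ^ 2 := by
      rw [norm_add_sq_real, real_inner_smul_left, real_inner_smul_right, hinner,
        norm_smul, norm_smul, Real.norm_eq_abs, Real.norm_eq_abs]
      rw [mul_pow, mul_pow, sq_abs, sq_abs]
      ring
    have hqv : ‖q‖ ≤ ‖v‖ := norm_projCLM_le Fᗮ v
    have hfin : ‖(Ml - Minf) v‖ ^ 2 ≤ ρ ^ 2 * ‖v‖ ^ 2 := by
      rw [himg, hsq, hρsq]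
      have hq2 : ‖q‖ ^ 2 ≤ ‖v‖ ^ 2 := by nlinarith [norm_nonneg q, norm_nonneg v]
      have h3 : 0 ≤ l * (2 - l) * cF ^ 2 := mul_nonneg hll.le (sq_nonneg cF)
      nlinarith [hMq_sq, hq2, sq_nonneg (1 - l), sq_nonneg cF, hll, h3]
    have ha := norm_nonneg ((Ml - Minf) v)
    have hb := norm_nonneg v
    nlinarith [hfin, mul_nonneg hρ0 hb]
  intro k hk
  induction k, hk using Nat.le_induction with
  | base => simp
  | succ n hn ih =>
    have hstep := hrec n hn
    calc ‖z (n + 1) - zs‖ = ‖(Ml - Minf) (z n - zs)‖ := by rw [hstep]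
      _ ≤ ρ * ‖z n - zs‖ := hcontr _
      _ ≤ ρ * (ρ ^ (n - K) * ‖z K - zs‖) := mul_le_mul_of_nonneg_left ih hρ0
      _ = ρ ^ (n + 1 - K) * ‖z K - zs‖ := by
          rw [← mul_assoc, ← pow_succ']
          congr 2
          omega
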